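/- If G = (V,E) is a (2,2)-circuit, i.e. |E| = 2|V| - 1 and every proper subgraph (V',E') with E' nonempty satisfies |E'| ≤ 2|V'| - 2, then the minimum degree of G is exactly 3. -/

import Mathlib

/-- A graph `G` on the finite vertex type `V` is a `(2,2)`-circuit if
`|E| = 2|V| - 1` and every proper subgraph `(V',E')` with `E'` nonempty
satisfies `|E'| ≤ 2|V'| - 2`. -/
def IsCircuit22 {V : Type*} [Fintype V] (G : SimpleGraph V) : Prop :=
  G.edgeSet.ncard + 1 = 2 * Fintype.card V ∧
  ∀ H : G.Subgraph, (H.verts ≠ Set.univ ∨ H.edgeSet ≠ G.edgeSet) →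
    H.edgeSet.Nonempty → H.edgeSet.ncard + 2 ≤ 2 * H.verts.ncard

/-- If `G` is a `(2,2)`-circuit then its minimum degree is exactly `3`:
every vertex has degree at least `3` and some vertex has degree exactly `3`. -/
theorem min_degree_of_circuit22 {V : Type*} [Fintype V] [DecidableEq V]
    (G : SimpleGraph V) [DecidableRel G.Adj] (hG : IsCircuit22 G) :
    (∀ v : V, 3 ≤ G.degree v) ∧ ∃ v : V, G.degree v = 3 := by
  obtain ⟨hcard, hsub⟩ := hG
  set n := Fintype.card V with hn
  have hn2 : 2 ≤ n := by
    by_contra h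
    have h1 : G.edgeSet.ncard ≠ 0 := by omega
    obtain ⟨e, he⟩ := Set.nonempty_of_ncard_ne_zero h1
    induction e using Sym2.ind with
    | _ a b =>
      have hab : a ≠ b := (G.mem_edgeSet.mp he).ne
      have : Nontrivial V := ⟨a, b, hab⟩
      have := Fintype.one_lt_card (α := V)
      omega
  have hdeg3 : ∀ v : V, 3 ≤ G.degree v := by
    intro v
    by_contra hlt
    push_neg at hlt
    have hlt2 : G.degree v ≤ 2 := by omega
    let H : G.Subgraph :=
      { verts := {v}ᶜ
        Adj := fun a b => G.Adj a b ∧ a ≠ v ∧ b ≠ v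
        adj_sub := fun h => h.1
        edge_vert := fun h => h.2.1
        symm := ⟨fun a b h => ⟨h.1.symm, h.2.2, h.2.1⟩⟩ }
    have hsubset : G.edgeSet ⊆ H.edgeSet ∪ G.incidenceSet v := by
      intro e he
      induction e using Sym2.ind with
      | _ a b =>
        by_cases hav : a = v
        · right; exact ⟨he, by simp [hav]⟩
        · by_cases hbv : b = v
          · right; exact ⟨he, by simp [hbv]⟩
          · left
            rw [SimpleGraph.Subgraph.mem_edgeSet]
            exact ⟨G.mem_edgeSet.mp he, hav, hbv⟩
    have h3 : (G.incidenceSet v).ncard = G.degree v := by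
      rw [← SimpleGraph.card_incidenceSet_eq_degree, ← Nat.card_coe_set_eq,
        Nat.card_eq_fintype_card]
    have hHcard : G.edgeSet.ncard ≤ H.edgeSet.ncard + G.degree v := by
      have h1 := Set.ncard_le_ncard hsubset (Set.toFinite _)
      have h2 := Set.ncard_union_le H.edgeSet (G.incidenceSet v)
      omega
    have hne : H.edgeSet.Nonempty := Set.nonempty_of_ncard_ne_zero (by omega)
    have hprop : H.verts ≠ Set.univ ∨ H.edgeSet ≠ G.edgeSet := by
      left
      intro h
      have hv : v ∈ H.verts := h ▸ Set.mem_univ v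
      exact hv rfl
    have hkey := hsub H hprop hne
    have hverts : H.verts.ncard = n - 1 := by
      have h1 : ({v} : Set V).ncard + ({v} : Set V)ᶜ.ncard = n := by
        rw [hn, ← Nat.card_eq_fintype_card]
        exact Set.ncard_add_ncard_compl _
      have h2 : ({v} : Set V).ncard = 1 := Set.ncard_singleton v
      show ({v}ᶜ : Set V).ncard = n - 1
      omega
    rw [hverts] at hkey
    omega
  refine ⟨hdeg3, ?_⟩
  by_contra h
  push_neg at h
  have h4 : ∀ v : V, 4 ≤ G.degree v := fun v => by
    have := hdeg3 v; have := h v; omega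
  have hsum := G.sum_degrees_eq_twice_card_edges
  have hcardF : G.edgeFinset.card = G.edgeSet.ncard :=
    (Set.ncard_eq_toFinset_card' _).symm
  have hge : 4 * n ≤ ∑ v, G.degree v := by
    calc 4 * n = ∑ _v : V, 4 := by
          simp [Finset.sum_const, Finset.card_univ, hn, mul_comm]
      _ ≤ ∑ v, G.degree v := Finset.sum_le_sum (fun v _ => h4 v)
  omega
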